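/- Per-iteration information gain of Frank–Wolfe with offline data: with M, a, α, V_off as above, let w := Tr(M⁻¹((1−α)aaᵀ + αV_off)) > d and β := (w−d)/((d−1)w). Then log det(M') − log det(M) ≥ (d−1)·log((d−1)w/(d(w−1))) + log(w/d), and setting δ := w/d − 1 > 0, this lower bound is at least log(1+δ) − δ/(1+δ). -/

import Mathlib

open Matrix

private lemma aux_one_add_sum_le_prod {ι : Type*} (s : Finset ι) (f : ι → ℝ)
    (hf : ∀ i ∈ s, 0 ≤ f i) : 1 + ∑ i ∈ s, f i ≤ ∏ i ∈ s, (1 + f i) := by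
  induction s using Finset.cons_induction with
  | empty => simp
  | cons a s ha ih =>
    rw [Finset.sum_cons, Finset.prod_cons]
    have h0 : 0 ≤ f a := hf a (Finset.mem_cons_self a s)
    have hs : ∀ i ∈ s, 0 ≤ f i := fun i hi => hf i (Finset.mem_cons_of_mem hi)
    have h1 : 0 ≤ ∑ i ∈ s, f i := Finset.sum_nonneg hs
    have h2 := ih hs
    nlinarith

private lemma aux_smul_posSemidef {n : Type*} [Fintype n] {A : Matrix n n ℝ}
    (hA : A.PosSemidef) {c : ℝ} (hc : 0 ≤ c) : (c • A).PosSemidef := by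
  refine ⟨?_, fun x => ?_⟩
  · rw [Matrix.IsHermitian, conjTranspose_smul, star_trivial, hA.1.eq]
  · exact (hA.smul hc).2 x

private lemma aux_vecMulVec_posSemidef {n : Type*} [Fintype n] [DecidableEq n] (a : n → ℝ) :
    (vecMulVec a a).PosSemidef := by
  rw [vecMulVec_eq (Fin 1)]
  have h := Matrix.posSemidef_conjTranspose_mul_self (replicateRow (Fin 1) a)
  rwa [conjTranspose_replicateRow, star_trivial] at h

private lemma aux_one_add_trace_le_det_one_add {n : Type*} [Fintype n] [DecidableEq n]
    {A : Matrix n n ℝ} (hA : A.PosSemidef) : 1 + A.trace ≤ (1 + A).det := by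
  have hH := hA.1
  have hspec := hH.spectral_theorem
  simp only [RCLike.ofReal_real_eq_id, Function.id_comp, Unitary.conjStarAlgAut_apply] at hspec
  set U : Matrix n n ℝ := (hH.eigenvectorUnitary : Matrix n n ℝ) with hUdef
  have hU1 : U * star U = 1 := Matrix.mem_unitaryGroup_iff.mp hH.eigenvectorUnitary.2
  have hU2 : star U * U = 1 := Matrix.mem_unitaryGroup_iff'.mp hH.eigenvectorUnitary.2
  have htr : A.trace = ∑ i, hH.eigenvalues i := by
    conv_lhs => rw [hspec]
    rw [trace_mul_comm, ← mul_assoc, hU2, one_mul, trace_diagonal]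
  have h1A : 1 + A = U * (1 + diagonal hH.eigenvalues) * star U := by
    conv_lhs => rw [hspec]
    rw [mul_add, add_mul, mul_one, hU1]
  have hdiag : (1 : Matrix n n ℝ) + diagonal hH.eigenvalues
      = diagonal (fun i => 1 + hH.eigenvalues i) := by
    rw [← diagonal_one, diagonal_add]
  have hdet : (1 + A).det = ∏ i, (1 + hH.eigenvalues i) := by
    rw [h1A, det_mul_right_comm, hU1, one_mul, hdiag, det_diagonal]
  rw [htr, hdet]
  exact aux_one_add_sum_le_prod Finset.univ _ (fun i _ => hA.eigenvalues_nonneg i)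

theorem stmt12 {d : ℕ} (hd : 2 ≤ d) (α : ℝ) (hα0 : 0 ≤ α) (hα1 : α < 1)
    (Vπ Voff : Matrix (Fin d) (Fin d) ℝ) (hVπ : Vπ.PosSemidef) (hVoff : Voff.PosSemidef)
    (a : Fin d → ℝ)
    (M : Matrix (Fin d) (Fin d) ℝ) (hM : M = (1 - α) • Vπ + α • Voff) (hMpd : M.PosDef)
    (w β : ℝ)
    (hw : w = (M⁻¹ * ((1 - α) • vecMulVec a a + α • Voff)).trace)
    (hwd : (d : ℝ) < w)
    (hβ : β = (w - d) / (((d : ℝ) - 1) * w))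
    (M' : Matrix (Fin d) (Fin d) ℝ)
    (hM' : M' = (1 + β)⁻¹ • (M + β • ((1 - α) • vecMulVec a a + α • Voff))) :
    ((d : ℝ) - 1) * Real.log (((d : ℝ) - 1) * w / ((d : ℝ) * (w - 1)))
        + Real.log (w / (d : ℝ))
      ≤ Real.log M'.det - Real.log M.det ∧
    Real.log (1 + (w / (d : ℝ) - 1)) - (w / (d : ℝ) - 1) / (1 + (w / (d : ℝ) - 1))
      ≤ ((d : ℝ) - 1) * Real.log (((d : ℝ) - 1) * w / ((d : ℝ) * (w - 1)))
        + Real.log (w / (d : ℝ)) := by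
  set N : Matrix (Fin d) (Fin d) ℝ := (1 - α) • vecMulVec a a + α • Voff with hNdef
  -- basic numeric facts
  have hd2 : (2:ℝ) ≤ (d:ℝ) := by exact_mod_cast hd
  have hd1 : (1:ℝ) ≤ (d:ℝ) - 1 := by linarith
  have hdpos : (0:ℝ) < (d:ℝ) := by linarith
  have hw1 : (1:ℝ) < w := by linarith
  have hwpos : (0:ℝ) < w := by linarith
  have hd1ne : ((d:ℝ) - 1) ≠ 0 := by linarith
  have hdne : (d:ℝ) ≠ 0 := ne_of_gt hdpos
  have hwne : w ≠ 0 := ne_of_gt hwpos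
  have hw1ne : w - 1 ≠ 0 := by linarith
  have hβpos : 0 < β := by
    rw [hβ]
    apply div_pos (by linarith)
    positivity
  have h1β : 1 + β = (d:ℝ) * (w - 1) / (((d:ℝ) - 1) * w) := by
    rw [hβ]; field_simp; ring
  have h1βpos : (0:ℝ) < 1 + β := by linarith
  have h1βne : (1:ℝ) + β ≠ 0 := ne_of_gt h1βpos
  have h1βw : 1 + β * w = (w - 1) / ((d:ℝ) - 1) := by
    rw [hβ]; field_simp; ring
  have h1βwpos : (0:ℝ) < 1 + β * w := by
    rw [h1βw]; apply div_pos <;> linarith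
  -- N is PSD
  have hN : N.PosSemidef := by
    rw [hNdef]
    exact (aux_smul_posSemidef (aux_vecMulVec_posSemidef a) (by linarith)).add
      (aux_smul_posSemidef hVoff hα0)
  -- square root of M
  open scoped MatrixOrder in
  set R : Matrix (Fin d) (Fin d) ℝ := CFC.sqrt M with hRdef
  open scoped MatrixOrder in
  have hRH : R.IsHermitian := (CFC.sqrt_nonneg M).posSemidef.1
  open scoped MatrixOrder in
  have hRR : R * R = M := CFC.sqrt_mul_sqrt_self M (hMpd.posSemidef : M.PosSemidef).nonneg
  have hMdetpos : 0 < M.det := hMpd.det_pos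
  have hRdet : IsUnit R.det := by
    have hmul : R.det * R.det = M.det := by rw [← det_mul, hRR]
    refine isUnit_iff_ne_zero.mpr ?_
    intro h
    rw [h, zero_mul] at hmul
    exact absurd hmul.symm (ne_of_gt hMdetpos)
  have hRinv : R * R⁻¹ = 1 := mul_nonsing_inv _ hRdet
  have hinvR : R⁻¹ * R = 1 := nonsing_inv_mul _ hRdet
  have hRinvH : (R⁻¹)ᴴ = R⁻¹ := by rw [conjTranspose_nonsing_inv, hRH.eq]
  set S : Matrix (Fin d) (Fin d) ℝ := R⁻¹ * N * R⁻¹ with hSdef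
  have hS : S.PosSemidef := by
    have h := hN.mul_mul_conjTranspose_same R⁻¹
    rwa [hRinvH] at h
  have hMinv : M⁻¹ = R⁻¹ * R⁻¹ := by rw [← hRR, Matrix.mul_inv_rev]
  have htrS : S.trace = w := by
    rw [hSdef, trace_mul_cycle, hw, hMinv]
  have hRSR : R * S * R = N := by
    rw [hSdef]
    have : R * (R⁻¹ * N * R⁻¹) * R = R * R⁻¹ * N * (R⁻¹ * R) := by
      simp only [Matrix.mul_assoc]
    rw [show R * (R⁻¹ * N * R⁻¹) = R * (R⁻¹ * N * R⁻¹) from rfl]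
    calc R * (R⁻¹ * N * R⁻¹) * R = R * R⁻¹ * N * (R⁻¹ * R) := by
          simp only [Matrix.mul_assoc]
      _ = N := by rw [hRinv, hinvR, one_mul, mul_one]
  have hkey : M + β • N = R * (1 + β • S) * R := by
    rw [mul_add, add_mul, mul_one, hRR, Matrix.mul_smul, Matrix.smul_mul, hRSR]
  -- determinant of 1 + β S
  have hβS : (β • S).PosSemidef := aux_smul_posSemidef hS hβpos.le
  have hdetIneq : 1 + β * w ≤ (1 + β • S).det := by
    have h := aux_one_add_trace_le_det_one_add hβS
    rwa [trace_smul, htrS, smul_eq_mul] at h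
  have hdetSpos : 0 < (1 + β • S).det := lt_of_lt_of_le h1βwpos hdetIneq
  have hdetM' : M'.det = (1 + β)⁻¹ ^ d * (M.det * (1 + β • S).det) := by
    rw [hM', det_smul, hkey, det_mul, det_mul, Fintype.card_fin]
    have hmul : R.det * R.det = M.det := by rw [← det_mul, hRR]
    rw [← hmul]; ring
  have hlogM' : Real.log M'.det
      = (d:ℝ) * Real.log (1 + β)⁻¹ + (Real.log M.det + Real.log (1 + β • S).det) := by
    rw [hdetM', Real.log_mul (by positivity) (by positivity),
      Real.log_mul (ne_of_gt hMdetpos) (ne_of_gt hdetSpos), Real.log_pow]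
  -- log identities
  have hlogQ : Real.log (((d:ℝ) - 1) * w / ((d:ℝ) * (w - 1))) = - Real.log (1 + β) := by
    rw [show ((d:ℝ) - 1) * w / ((d:ℝ) * (w - 1)) = (1 + β)⁻¹ by rw [h1β, inv_div],
      Real.log_inv]
  have hlogwd : Real.log (w / (d:ℝ)) = Real.log (1 + β * w) - Real.log (1 + β) := by
    rw [show w / (d:ℝ) = (1 + β * w) / (1 + β) by rw [h1βw, h1β]; field_simp,
      Real.log_div (ne_of_gt h1βwpos) h1βne]
  have hmono : Real.log (1 + β * w) ≤ Real.log (1 + β • S).det :=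
    Real.log_le_log h1βwpos hdetIneq
  constructor
  · rw [hlogQ, hlogwd, hlogM', Real.log_inv]
    nlinarith [hmono]
  · rw [hlogQ, hlogwd]
    have hδ : (1:ℝ) + (w / (d:ℝ) - 1) = w / (d:ℝ) := by ring
    rw [hδ, hlogwd]
    have hx : (w / (d:ℝ) - 1) / (w / (d:ℝ)) = ((d:ℝ) - 1) * β := by
      rw [hβ]; field_simp
    have hlb : Real.log (1 + β) ≤ β := by
      have := Real.log_le_sub_one_of_pos h1βpos
      linarith
    have hmul : ((d:ℝ) - 1) * Real.log (1 + β) ≤ ((d:ℝ) - 1) * β :=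
      mul_le_mul_of_nonneg_left hlb (by linarith)
    linarith [hmul, hx]
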